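/- arXiv:1411.7957 — 3 statements merged into one kernel-verified Lean document; each statement's English description precedes it below -/
import Mathlib

section
/- Let (A, μ) be a left alternative algebra and α: A → A an algebra endomorphism. Then (A, μ_α, α), where μ_α = α ∘ μ, is a left Hom-alternative algebra. -/
/-- Left Hom-alternative identity. -/
def LeftHomAlt {K A : Type*} [Field K] [AddCommGroup A] [Module K A]
    (mu : A →ₗ[K] A →ₗ[K] A) (alpha : A →ₗ[K] A) : Prop :=
  ∀ x y : A, mu (alpha x) (mu x y) = mu (mu x x) (alpha y)

/-- Right Hom-alternative identity. -/
def RightHomAlt {K A : Type*} [Field K] [AddCommGroup A] [Module K A]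
    (mu : A →ₗ[K] A →ₗ[K] A) (alpha : A →ₗ[K] A) : Prop :=
  ∀ x y : A, mu (alpha x) (mu y y) = mu (mu x y) (alpha y)

theorem stmt6 {K A : Type*} [Field K] [CharZero K] [AddCommGroup A] [Module K A]
    (mu : A →ₗ[K] A →ₗ[K] A) (alpha : A →ₗ[K] A)
    (halt : ∀ x y : A, mu x (mu x y) = mu (mu x x) y)
    (hend : ∀ x y : A, alpha (mu x y) = mu (alpha x) (alpha y)) :
    LeftHomAlt (mu.compr₂ alpha) alpha := by
  intro x y
  simp only [LinearMap.compr₂_apply]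
  simp only [hend]; rw [halt]
end

section
/- Let (A, Δ, γ) be a Poisson coalgebra and α: A → A a Poisson coalgebra endomorphism. Then (A, Δ∘α, γ∘α, α) is a Hom-Poisson coalgebra. -/
open TensorProduct

/-- Flip on a tensor product. -/
noncomputable def tauT (K A B : Type*) [Field K] [AddCommGroup A] [Module K A]
    [AddCommGroup B] [Module K B] : A ⊗[K] B →ₗ[K] B ⊗[K] A :=
  (TensorProduct.comm K A B).toLinearMap

/-- Cyclic permutation x₁⊗x₂⊗x₃ ↦ x₃⊗x₁⊗x₂ on A⊗(A⊗A). -/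
noncomputable def cyc (K A : Type*) [Field K] [AddCommGroup A] [Module K A] :
    A ⊗[K] (A ⊗[K] A) →ₗ[K] A ⊗[K] (A ⊗[K] A) :=
  (TensorProduct.comm K (A ⊗[K] A) A).toLinearMap ∘ₗ
    (TensorProduct.assoc K A A A).symm.toLinearMap

/-- τ⊗Id acting on the first two factors of A⊗(A⊗M). -/
noncomputable def swap12 (K A M : Type*) [Field K] [AddCommGroup A] [Module K A]
    [AddCommGroup M] [Module K M] : A ⊗[K] (A ⊗[K] M) →ₗ[K] A ⊗[K] (A ⊗[K] M) :=
  (TensorProduct.assoc K A A M).toLinearMap ∘ₗ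
    TensorProduct.map (tauT K A A) LinearMap.id ∘ₗ
      (TensorProduct.assoc K A A M).symm.toLinearMap

/-- A (not necessarily cocommutative) Hom-Poisson coalgebra. -/
def IsHomPoissonCoalgebra (K A : Type*) [Field K] [AddCommGroup A] [Module K A]
    (Δ γ : A →ₗ[K] A ⊗[K] A) (α : A →ₗ[K] A) : Prop :=
  Δ ∘ₗ α = TensorProduct.map α α ∘ₗ Δ ∧
  TensorProduct.map α Δ ∘ₗ Δ =
    (TensorProduct.assoc K A A A).toLinearMap ∘ₗ TensorProduct.map Δ α ∘ₗ Δ ∧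
  γ = -(tauT K A A ∘ₗ γ) ∧
  γ ∘ₗ α = TensorProduct.map α α ∘ₗ γ ∧
  (LinearMap.id + cyc K A + cyc K A ∘ₗ cyc K A) ∘ₗ TensorProduct.map α γ ∘ₗ γ = 0 ∧
  TensorProduct.map α Δ ∘ₗ γ =
    (TensorProduct.assoc K A A A).toLinearMap ∘ₗ TensorProduct.map γ α ∘ₗ Δ +
      swap12 K A A ∘ₗ TensorProduct.map α γ ∘ₗ Δ

theorem stmt10 {K A : Type*} [Field K] [CharZero K] [AddCommGroup A] [Module K A]
    (Δ γ : A →ₗ[K] A ⊗[K] A) (α : A →ₗ[K] A)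
    -- (A, Δ, γ) is a Poisson coalgebra:
    (hcoassoc : TensorProduct.map LinearMap.id Δ ∘ₗ Δ =
      (TensorProduct.assoc K A A A).toLinearMap ∘ₗ TensorProduct.map Δ LinearMap.id ∘ₗ Δ)
    (hskew : γ = -(tauT K A A ∘ₗ γ))
    (hjac : (LinearMap.id + cyc K A + cyc K A ∘ₗ cyc K A) ∘ₗ
      TensorProduct.map LinearMap.id γ ∘ₗ γ = 0)
    (hleib : TensorProduct.map LinearMap.id Δ ∘ₗ γ =
      (TensorProduct.assoc K A A A).toLinearMap ∘ₗ TensorProduct.map γ LinearMap.id ∘ₗ Δ +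
        swap12 K A A ∘ₗ TensorProduct.map LinearMap.id γ ∘ₗ Δ)
    -- α is a Poisson coalgebra endomorphism:
    (hαΔ : Δ ∘ₗ α = TensorProduct.map α α ∘ₗ Δ)
    (hαγ : γ ∘ₗ α = TensorProduct.map α α ∘ₗ γ) :
    IsHomPoissonCoalgebra K A (Δ ∘ₗ α) (γ ∘ₗ α) α := by
  classical
  -- decomposition lemmas
  have e1 : TensorProduct.map α (Δ ∘ₗ α) =
      TensorProduct.map LinearMap.id Δ ∘ₗ TensorProduct.map α α := by
    rw [← TensorProduct.map_comp, LinearMap.id_comp]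
  have e2 : TensorProduct.map (Δ ∘ₗ α) α =
      TensorProduct.map Δ LinearMap.id ∘ₗ TensorProduct.map α α := by
    rw [← TensorProduct.map_comp, LinearMap.id_comp]
  have e3 : TensorProduct.map α (γ ∘ₗ α) =
      TensorProduct.map LinearMap.id γ ∘ₗ TensorProduct.map α α := by
    rw [← TensorProduct.map_comp, LinearMap.id_comp]
  have e4 : TensorProduct.map (γ ∘ₗ α) α =
      TensorProduct.map γ LinearMap.id ∘ₗ TensorProduct.map α α := by
    rw [← TensorProduct.map_comp, LinearMap.id_comp]
  have h1 : ∀ x, Δ (α x) = TensorProduct.map α α (Δ x) := fun x => LinearMap.congr_fun hαΔ x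
  have h2 : ∀ x, γ (α x) = TensorProduct.map α α (γ x) := fun x => LinearMap.congr_fun hαγ x
  refine ⟨?_, ?_, ?_, ?_, ?_, ?_⟩
  · ext a
    simp only [LinearMap.comp_apply]
    exact h1 (α a)
  · ext a
    have hc := LinearMap.congr_fun hcoassoc (α (α a))
    simp only [LinearMap.comp_apply] at hc ⊢
    rw [LinearMap.congr_fun e1 (Δ (α a)), LinearMap.congr_fun e2 (Δ (α a))]
    simp only [LinearMap.comp_apply]
    rw [← h1 (α a)]
    exact hc
  · conv_lhs => rw [hskew]
    ext a
    simp only [LinearMap.comp_apply, LinearMap.neg_apply, LinearMap.neg_comp]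
  · ext a
    simp only [LinearMap.comp_apply]
    exact h2 (α a)
  · ext a
    have hj := LinearMap.congr_fun hjac (α (α a))
    simp only [LinearMap.comp_apply, LinearMap.zero_apply, LinearMap.add_apply,
      LinearMap.id_apply] at hj ⊢
    rw [LinearMap.congr_fun e3 (γ (α a))]
    simp only [LinearMap.comp_apply]
    rw [← h2 (α a)]
    exact hj
  · ext a
    have hl := LinearMap.congr_fun hleib (α (α a))
    simp only [LinearMap.comp_apply, LinearMap.add_apply] at hl ⊢
    rw [LinearMap.congr_fun e1 (γ (α a)), LinearMap.congr_fun e4 (Δ (α a)),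
      LinearMap.congr_fun e3 (Δ (α a))]
    simp only [LinearMap.comp_apply]
    rw [← h2 (α a), ← h1 (α a)]
    exact hl
end

section
/- Let (M, μ_M, β) be a module over a left Hom-alternative algebra (A, μ, α). Define μ̃_M = μ_M ∘ (α²⊗Id_M), i.e., μ̃_M(x, m) = μ_M(α²(x), m). Then (M, μ̃_M, β) is also a module over (A, μ, α). -/
/-- Module structure over a left Hom-alternative algebra. -/
def IsLeftHomAltModule {K A M : Type*} [Field K] [AddCommGroup A] [Module K A]
    [AddCommGroup M] [Module K M] (mu : A →ₗ[K] A →ₗ[K] A) (alpha : A →ₗ[K] A)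
    (muM : A →ₗ[K] M →ₗ[K] M) (beta : M →ₗ[K] M) : Prop :=
  ∀ (x : A) (m : M), muM (alpha x) (muM x m) = muM (mu x x) (beta m)

theorem stmt11 {K A M : Type*} [Field K] [CharZero K] [AddCommGroup A] [Module K A]
    [AddCommGroup M] [Module K M]
    (mu : A →ₗ[K] A →ₗ[K] A) (alpha : A →ₗ[K] A)
    (muM : A →ₗ[K] M →ₗ[K] M) (beta : M →ₗ[K] M)
    (halg : LeftHomAlt mu alpha)
    (hend : ∀ x y : A, alpha (mu x y) = mu (alpha x) (alpha y))
    (hmod : IsLeftHomAltModule mu alpha muM beta) :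
    IsLeftHomAltModule mu alpha (muM ∘ₗ (alpha ∘ₗ alpha)) beta := by
  intro x m
  simp only [LinearMap.comp_apply]
  rw [hend, hend, hmod (alpha (alpha x)) m]
end
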